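/- For every σ ∈ 𝔖_n, every k with 0 ≤ k ≤ n, and every i with 1 ≤ i ≤ n−1, one has T_k(σ·S_i) = J_i(T_k σ); that is, sorting positions i, i+1 of the permutation into decreasing order and then thresholding at k is the same as thresholding at k and then performing a TASEP jump at position i. (Deterministic core of Lemma 3.1) -/

import Mathlib

/-- The sorting operator `S_i`, acting on the right of a permutation of `Fin n`.
Positions are 1-based: for `1 ≤ i ≤ n-1`, the positions `i` and `i+1` correspond to
the `Fin n` indices `i-1` and `i`.  `σ·S_i := σ * τ_i` (where `(σ * τ)(x) = σ(τ(x))`)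
if the values of `σ` at positions `i`, `i+1` are in increasing order, and `σ·S_i := σ`
otherwise. -/
def sortOp (n : ℕ) (i : ℕ) (σ : Equiv.Perm (Fin n)) : Equiv.Perm (Fin n) :=
  if h : 1 ≤ i ∧ i < n then
    let p : Fin n := ⟨i - 1, lt_of_le_of_lt (Nat.sub_le i 1) h.2⟩
    let q : Fin n := ⟨i, h.2⟩
    if σ p < σ q then σ * Equiv.swap p q else σ
  else σ

/-- The thresholding map `T_k`: `(T_k σ)(x) = 1` iff the (1-based) label `σ(x)` is
at most `k`. -/
def thresh (n k : ℕ) (σ : Equiv.Perm (Fin n)) : Fin n → Bool :=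
  fun x => decide ((σ x : ℕ) + 1 ≤ k)

/-- The jump operator `J_i` on 0/1-configurations on `{1, …, n}` (1-based positions
`i`, `i+1` correspond to `Fin n` indices `i-1`, `i`): exchange the values at positions
`i` and `i+1` if there is a particle at `i` and a hole at `i+1`. -/
def jumpOp (n : ℕ) (i : ℕ) (ν : Fin n → Bool) : Fin n → Bool :=
  if h : 1 ≤ i ∧ i < n then
    let p : Fin n := ⟨i - 1, lt_of_le_of_lt (Nat.sub_le i 1) h.2⟩
    let q : Fin n := ⟨i, h.2⟩
    if ν p = true ∧ ν q = false then
      fun x => if x = p then ν q else if x = q then ν p else ν x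
    else ν
  else ν

/-- Deterministic core of Lemma 3.1: `T_k (σ·S_i) = J_i (T_k σ)` for all
`σ ∈ 𝔖_n`, `0 ≤ k ≤ n` and `1 ≤ i ≤ n-1`. -/
private lemma thresh_key (n k : ℕ) (σ : Equiv.Perm (Fin n)) (p q : Fin n) (hpq : p ≠ q) :
    thresh n k (if σ p < σ q then σ * Equiv.swap p q else σ) =
      (if thresh n k σ p = true ∧ thresh n k σ q = false then
        (fun x => if x = p then thresh n k σ q else if x = q then thresh n k σ p
          else thresh n k σ x)
      else thresh n k σ) := by
  by_cases hlt : σ p < σ q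
  · rw [if_pos hlt]
    have hltv : (σ p : ℕ) < σ q := hlt
    by_cases hcond : thresh n k σ p = true ∧ thresh n k σ q = false
    · rw [if_pos hcond]
      funext x
      simp only [thresh, Equiv.Perm.mul_apply]
      by_cases hxp : x = p
      · simp [hxp, Equiv.swap_apply_left]
      · by_cases hxq : x = q
        · simp [hxq, hxp, hpq.symm, Equiv.swap_apply_right]
        · simp [hxp, hxq, Equiv.swap_apply_of_ne_of_ne hxp hxq]
    · rw [if_neg hcond]
      simp only [thresh, decide_eq_true_eq, decide_eq_false_iff_not, not_and, not_not] at hcond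
      funext x
      simp only [thresh, Equiv.Perm.mul_apply, decide_eq_decide]
      by_cases hxp : x = p
      · subst hxp
        simp only [Equiv.swap_apply_left, decide_eq_decide]
        exact ⟨fun hq' => by omega, fun hp' => hcond hp'⟩
      · by_cases hxq : x = q
        · subst hxq
          simp only [Equiv.swap_apply_right, decide_eq_decide]
          exact ⟨fun hp' => hcond hp', fun hq' => by omega⟩
        · simp only [Equiv.swap_apply_of_ne_of_ne hxp hxq]
  · rw [if_neg hlt]
    have hge : (σ q : ℕ) < σ p :=
      lt_of_le_of_ne (Fin.le_iff_val_le_val.mp (not_lt.mp hlt))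
        (fun e => hpq (σ.injective (Fin.ext e)).symm)
    have hcond : ¬ (thresh n k σ p = true ∧ thresh n k σ q = false) := by
      simp only [thresh, decide_eq_true_eq, decide_eq_false_iff_not, not_and, not_not]
      intro hp'; omega
    rw [if_neg hcond]

theorem thresh_sortOp (n k i : ℕ) (hk : k ≤ n) (hi1 : 1 ≤ i) (hi2 : i ≤ n - 1)
    (σ : Equiv.Perm (Fin n)) :
    thresh n k (sortOp n i σ) = jumpOp n i (thresh n k σ) := by
  have h : 1 ≤ i ∧ i < n := ⟨hi1, by omega⟩
  unfold sortOp jumpOp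
  rw [dif_pos h, dif_pos h]
  exact thresh_key n k σ _ _ (by simp [Fin.ext_iff]; omega)
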